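/- The two-qubit state ρ₁ := (1/4)(I⊗I) + (1/12)(I⊗Y + I⊗Z − X⊗X + Y⊗X + Z⊗X) is not a convex combination of two-qubit stabilizer states; that is, ρ₁ does not lie in the convex hull of the finite set of matrices (1/4)(I⊗I + A + B + AB) where A = s·(P₁⊗P₂), B = t·(Q₁⊗Q₂) range over all choices with P₁,P₂,Q₁,Q₂ ∈ {I,X,Y,Z}, s,t ∈ {1,−1}, A ≠ ±(I⊗I), B ≠ ±(I⊗I), A ≠ ±B, and AB = BA. -/

import Mathlib

open Matrix Kronecker

noncomputable def Id2 : Matrix (Fin 2) (Fin 2) ℂ := 1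
noncomputable def PX : Matrix (Fin 2) (Fin 2) ℂ := !![0, 1; 1, 0]
noncomputable def PY : Matrix (Fin 2) (Fin 2) ℂ := !![0, -Complex.I; Complex.I, 0]
noncomputable def PZ : Matrix (Fin 2) (Fin 2) ℂ := !![1, 0; 0, -1]

/-- The four Pauli matrices `I, X, Y, Z`. -/
noncomputable def Pauli : Fin 4 → Matrix (Fin 2) (Fin 2) ℂ := ![Id2, PX, PY, PZ]

/-- The set of the 60 two-qubit stabilizer states
`(1/4)(I⊗I + A + B + AB)` with `A = s·(P₁⊗P₂)`, `B = t·(Q₁⊗Q₂)`,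
`s, t ∈ {1, −1}`, `A ≠ ±I⊗I`, `B ≠ ±I⊗I`, `A ≠ ±B`, `AB = BA`. -/
noncomputable def twoQubitStabStates : Set (Matrix (Fin 2 × Fin 2) (Fin 2 × Fin 2) ℂ) :=
  {σ | ∃ (p₁ p₂ q₁ q₂ : Fin 4) (s t : ℂ) (A B : Matrix (Fin 2 × Fin 2) (Fin 2 × Fin 2) ℂ),
    (s = 1 ∨ s = -1) ∧ (t = 1 ∨ t = -1) ∧
    A = s • (Pauli p₁ ⊗ₖ Pauli p₂) ∧ B = t • (Pauli q₁ ⊗ₖ Pauli q₂) ∧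
    A ≠ Id2 ⊗ₖ Id2 ∧ A ≠ -(Id2 ⊗ₖ Id2) ∧
    B ≠ Id2 ⊗ₖ Id2 ∧ B ≠ -(Id2 ⊗ₖ Id2) ∧
    A ≠ B ∧ A ≠ -B ∧ A * B = B * A ∧
    σ = (1 / 4 : ℂ) • (Id2 ⊗ₖ Id2 + A + B + A * B)}

/-- The two-qubit state `ρ₁ = (1/4)I⊗I + (1/12)(I⊗Y + I⊗Z − X⊗X + Y⊗X + Z⊗X)`. -/
noncomputable def rho1 : Matrix (Fin 2 × Fin 2) (Fin 2 × Fin 2) ℂ :=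
  (1 / 4 : ℂ) • (Id2 ⊗ₖ Id2) +
    (1 / 12 : ℂ) • (Id2 ⊗ₖ PY + Id2 ⊗ₖ PZ - PX ⊗ₖ PX + PY ⊗ₖ PX + PZ ⊗ₖ PX)

/-! ### Auxiliary machinery for the proof -/

/-- The witness operator `W = I⊗Y + I⊗Z − X⊗X + Y⊗X + Z⊗X`. -/
noncomputable def Wm : Matrix (Fin 2 × Fin 2) (Fin 2 × Fin 2) ℂ :=
  Id2 ⊗ₖ PY + Id2 ⊗ₖ PZ - PX ⊗ₖ PX + PY ⊗ₖ PX + PZ ⊗ₖ PX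

/-- Pauli multiplication table. -/
def pmT : Fin 4 → Fin 4 → Fin 4 := ![![0,1,2,3],![1,0,3,2],![2,3,0,1],![3,2,1,0]]
/-- Pauli multiplication phase exponent table: `Pauli a * Pauli b = I ^ (eT a b) • Pauli (pmT a b)`. -/
def eT : Fin 4 → Fin 4 → ℕ := ![![0,0,0,0],![0,0,1,3],![0,3,0,1],![0,1,3,0]]
/-- Table of `trace ((Pauli a ⊗ₖ Pauli b) * Wm)`. -/
def GzT : Fin 4 → Fin 4 → ℤ := ![![0,0,4,4],![0,-4,0,0],![0,4,0,0],![0,4,0,0]]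
/-- Real part of `I ^ n` for `n < 4`. -/
def rphase : ℕ → ℤ := fun n => if n = 0 then 1 else if n = 2 then -1 else 0

lemma pauli_mul (a b : Fin 4) :
    Pauli a * Pauli b = (Complex.I ^ (eT a b)) • Pauli (pmT a b) := by
  fin_cases a <;> fin_cases b <;>
    simp [Pauli, PX, PY, PZ, Id2, pmT, eT, Matrix.vecHead, Matrix.vecTail] <;>
    ext i j <;> fin_cases i <;> fin_cases j <;>
    simp [Matrix.mul_apply, Fin.sum_univ_two, Matrix.vecHead, Matrix.vecTail, pow_succ,
      Complex.I_sq] <;> ring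

lemma tau (a b : Fin 4) :
    trace (Pauli a * Pauli b) = if a = b then 2 else 0 := by
  fin_cases a <;> fin_cases b <;>
    simp [Pauli, PX, PY, PZ, Id2, Matrix.trace_fin_two, Matrix.mul_apply,
      Fin.sum_univ_two, Matrix.vecHead, Matrix.vecTail] <;> ring_nf

lemma keyG (a b : Fin 4) :
    trace ((Pauli a ⊗ₖ Pauli b) * Wm) = ((GzT a b : ℤ) : ℂ) := by
  rw [show Wm = Pauli 0 ⊗ₖ Pauli 2 + Pauli 0 ⊗ₖ Pauli 3 - Pauli 1 ⊗ₖ Pauli 1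
      + Pauli 2 ⊗ₖ Pauli 1 + Pauli 3 ⊗ₖ Pauli 1 from rfl]
  simp only [Matrix.mul_add, Matrix.mul_sub, trace_add, trace_sub,
    ← Matrix.mul_kronecker_mul, Matrix.trace_kronecker, tau]
  fin_cases a <;> fin_cases b <;>
    simp (config := { decide := true }) [GzT, Matrix.vecHead, Matrix.vecTail] <;> norm_num

lemma I_pow_mod (n : ℕ) : Complex.I ^ n = Complex.I ^ (n % 4) := by
  conv_lhs => rw [← Nat.div_add_mod n 4]
  rw [pow_add, pow_mul, Complex.I_pow_four, one_pow, one_mul]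

lemma I_pow_re (n : ℕ) : (Complex.I ^ n).re = (rphase (n % 4) : ℝ) := by
  rw [I_pow_mod]
  have h : n % 4 < 4 := Nat.mod_lt _ (by norm_num)
  interval_cases h : n % 4 <;> norm_num [rphase, pow_succ, Complex.I_sq]

lemma I_pow_inj (m n : ℕ) (h : Complex.I ^ m = Complex.I ^ n) : m % 4 = n % 4 := by
  rw [I_pow_mod, I_pow_mod n] at h
  have hm : m % 4 < 4 := Nat.mod_lt _ (by norm_num)
  have hn : n % 4 < 4 := Nat.mod_lt _ (by norm_num)
  interval_cases hm' : m % 4 <;> interval_cases hn' : n % 4 <;>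
    simp_all [pow_succ, Complex.ext_iff] <;> norm_num at h

lemma core : ∀ (p₁ p₂ q₁ q₂ : Fin 4) (sb tb : Bool),
    (¬(p₁ = 0 ∧ p₂ = 0)) → (¬(q₁ = 0 ∧ q₂ = 0)) → (¬(p₁ = q₁ ∧ p₂ = q₂)) →
    ((eT p₁ q₁ + eT p₂ q₂) % 4 = (eT q₁ p₁ + eT q₂ p₂) % 4) →
    (cond sb 1 (-1) : ℤ) * GzT p₁ p₂ + (cond tb 1 (-1) : ℤ) * GzT q₁ q₂ +
      (cond sb 1 (-1) : ℤ) * (cond tb 1 (-1) : ℤ) *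
        rphase ((eT p₁ q₁ + eT p₂ q₂) % 4) * GzT (pmT p₁ q₁) (pmT p₂ q₂) ≤ 4 := by
  decide

lemma pmT_symm : ∀ a b, pmT a b = pmT b a := by decide

/-- Linear independence via trace: scalar multiples of a Pauli tensor agree iff scalars agree. -/
lemma smul_pauli_inj (m₁ m₂ : Fin 4) {c d : ℂ}
    (h : c • (Pauli m₁ ⊗ₖ Pauli m₂) = d • (Pauli m₁ ⊗ₖ Pauli m₂)) : c = d := by
  have h2 := congrArg (fun M => trace (M * (Pauli m₁ ⊗ₖ Pauli m₂))) h
  simp only [smul_mul_assoc, trace_smul, ← Matrix.mul_kronecker_mul,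
    Matrix.trace_kronecker, tau, smul_eq_mul] at h2
  norm_num at h2
  exact h2

/-- Product formula for signed Pauli tensors. -/
lemma AB_form (p₁ p₂ q₁ q₂ : Fin 4) (s t : ℂ) :
    (s • (Pauli p₁ ⊗ₖ Pauli p₂)) * (t • (Pauli q₁ ⊗ₖ Pauli q₂)) =
      (s * t * Complex.I ^ (eT p₁ q₁ + eT p₂ q₂)) •
        (Pauli (pmT p₁ q₁) ⊗ₖ Pauli (pmT p₂ q₂)) := by
  rw [smul_mul_assoc, mul_smul_comm, ← Matrix.mul_kronecker_mul,
    pauli_mul p₁ q₁, pauli_mul p₂ q₂, Matrix.smul_kronecker, Matrix.kronecker_smul,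
    smul_smul, smul_smul, smul_smul, pow_add]
  ring_nf

lemma pauli00 : Pauli 0 ⊗ₖ Pauli 0 = Id2 ⊗ₖ Id2 := rfl

/-- The key bound: every stabilizer state has witness expectation at most 1. -/
lemma stab_bound : ∀ σ ∈ twoQubitStabStates, (trace (σ * Wm)).re ≤ 1 := by
  rintro σ ⟨p₁, p₂, q₁, q₂, s, t, A, B, hs, ht, hA, hB, hAI, hAnI, hBI, hBnI,
    hABne, hABnne, hcomm, rfl⟩
  -- index-level constraints
  have hp0 : ¬(p₁ = 0 ∧ p₂ = 0) := by
    rintro ⟨rfl, rfl⟩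
    rcases hs with rfl | rfl
    · exact hAI (by rw [hA, pauli00, one_smul])
    · exact hAnI (by rw [hA, pauli00, neg_smul, one_smul])
  have hq0 : ¬(q₁ = 0 ∧ q₂ = 0) := by
    rintro ⟨rfl, rfl⟩
    rcases ht with rfl | rfl
    · exact hBI (by rw [hB, pauli00, one_smul])
    · exact hBnI (by rw [hB, pauli00, neg_smul, one_smul])
  have hpq : ¬(p₁ = q₁ ∧ p₂ = q₂) := by
    rintro ⟨rfl, rfl⟩
    rcases hs with rfl | rfl <;> rcases ht with rfl | rfl
    · exact hABne (by simp [hA, hB])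
    · exact hABnne (by simp [hA, hB])
    · exact hABnne (by simp [hA, hB])
    · exact hABne (by simp [hA, hB])
  have hs0 : s ≠ 0 := by rcases hs with rfl | rfl <;> norm_num
  have ht0 : t ≠ 0 := by rcases ht with rfl | rfl <;> norm_num
  -- commuting condition at the phase level
  have hmod : (eT p₁ q₁ + eT p₂ q₂) % 4 = (eT q₁ p₁ + eT q₂ p₂) % 4 := by
    have h1 : A * B = (s * t * Complex.I ^ (eT p₁ q₁ + eT p₂ q₂)) •
        (Pauli (pmT p₁ q₁) ⊗ₖ Pauli (pmT p₂ q₂)) := by rw [hA, hB, AB_form]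
    have h2 : B * A = (t * s * Complex.I ^ (eT q₁ p₁ + eT q₂ p₂)) •
        (Pauli (pmT p₁ q₁) ⊗ₖ Pauli (pmT p₂ q₂)) := by
      rw [hB, hA, AB_form, pmT_symm q₁ p₁, pmT_symm q₂ p₂]
    have h3 : (s * t * Complex.I ^ (eT p₁ q₁ + eT p₂ q₂)) •
        (Pauli (pmT p₁ q₁) ⊗ₖ Pauli (pmT p₂ q₂)) = (t * s * Complex.I ^ (eT q₁ p₁ + eT q₂ p₂)) •
        (Pauli (pmT p₁ q₁) ⊗ₖ Pauli (pmT p₂ q₂)) := by rw [← h1, ← h2]; exact hcomm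
    have h3 := smul_pauli_inj _ _ h3
    have h4 : Complex.I ^ (eT p₁ q₁ + eT p₂ q₂) = Complex.I ^ (eT q₁ p₁ + eT q₂ p₂) := by
      have := mul_left_cancel₀ (mul_ne_zero hs0 ht0) (by
        calc s * t * Complex.I ^ (eT p₁ q₁ + eT p₂ q₂) = _ := h3
        _ = s * t * Complex.I ^ (eT q₁ p₁ + eT q₂ p₂) := by ring)
      exact this
    exact I_pow_inj _ _ h4
  -- compute the trace
  have h1 : A * B = (s * t * Complex.I ^ (eT p₁ q₁ + eT p₂ q₂)) •
      (Pauli (pmT p₁ q₁) ⊗ₖ Pauli (pmT p₂ q₂)) := by rw [hA, hB, AB_form]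
  have htr : trace (((1 / 4 : ℂ) • (Id2 ⊗ₖ Id2 + A + B + A * B)) * Wm) =
      (1 / 4 : ℂ) * (s * ((GzT p₁ p₂ : ℤ) : ℂ) + t * ((GzT q₁ q₂ : ℤ) : ℂ) +
        s * t * Complex.I ^ (eT p₁ q₁ + eT p₂ q₂) *
          ((GzT (pmT p₁ q₁) (pmT p₂ q₂) : ℤ) : ℂ)) := by
    rw [smul_mul_assoc, trace_smul, Matrix.add_mul, Matrix.add_mul, Matrix.add_mul,
      trace_add, trace_add, trace_add, h1, hA, hB,
      smul_mul_assoc, smul_mul_assoc, smul_mul_assoc, trace_smul, trace_smul, trace_smul,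
      ← pauli00, keyG, keyG, keyG, keyG]
    simp [GzT, smul_eq_mul]
    try ring
  set E := eT p₁ q₁ + eT p₂ q₂ with hE
  -- now take real parts
  have hre : (trace (((1 / 4 : ℂ) • (Id2 ⊗ₖ Id2 + A + B + A * B)) * Wm)).re =
      (1 / 4 : ℝ) * (s.re * (GzT p₁ p₂ : ℝ) + t.re * (GzT q₁ q₂ : ℝ) +
        s.re * t.re * (rphase (E % 4) : ℝ) * (GzT (pmT p₁ q₁) (pmT p₂ q₂) : ℝ)) := by
    rw [htr]
    have hsim : s.im = 0 := by rcases hs with rfl | rfl <;> simp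
    have htim : t.im = 0 := by rcases ht with rfl | rfl <;> simp
    have hIre := I_pow_re E
    have hIim : (Complex.I ^ E).im = (Complex.I ^ E).im := rfl
    simp [Complex.mul_re, Complex.mul_im, hsim, htim, hIre]
    try ring
  rw [hre]
  -- reduce to the integer bound
  have hint : s.re * (GzT p₁ p₂ : ℝ) + t.re * (GzT q₁ q₂ : ℝ) +
      s.re * t.re * (rphase (E % 4) : ℝ) * (GzT (pmT p₁ q₁) (pmT p₂ q₂) : ℝ) ≤ 4 := by
    have hb : ∀ sb tb : Bool,
        ((cond sb 1 (-1) : ℤ) : ℝ) * (GzT p₁ p₂ : ℝ) + ((cond tb 1 (-1) : ℤ) : ℝ) * (GzT q₁ q₂ : ℝ) +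
        ((cond sb 1 (-1) : ℤ) : ℝ) * ((cond tb 1 (-1) : ℤ) : ℝ) * (rphase (E % 4) : ℝ) *
          (GzT (pmT p₁ q₁) (pmT p₂ q₂) : ℝ) ≤ 4 := by
      intro sb tb
      have := core p₁ p₂ q₁ q₂ sb tb hp0 hq0 hpq hmod
      have h4 : ((4 : ℤ) : ℝ) = 4 := by norm_num
      calc _ = (((cond sb 1 (-1) : ℤ) * GzT p₁ p₂ + (cond tb 1 (-1) : ℤ) * GzT q₁ q₂ +
          (cond sb 1 (-1) : ℤ) * (cond tb 1 (-1) : ℤ) * rphase ((eT p₁ q₁ + eT p₂ q₂) % 4) *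
            GzT (pmT p₁ q₁) (pmT p₂ q₂) : ℤ) : ℝ) := by push_cast [hE]; ring
      _ ≤ ((4 : ℤ) : ℝ) := by exact_mod_cast this
      _ = 4 := h4
    rcases hs with rfl | rfl <;> rcases ht with rfl | rfl
    · simpa using hb true true
    · simpa using hb true false
    · simpa using hb false true
    · simpa using hb false false
  nlinarith [hint]

/-- `ρ₁` is not a convex combination of two-qubit stabilizer states. -/
theorem stmt_14 : rho1 ∉ convexHull ℝ twoQubitStabStates := by
  intro hmem
  -- the halfspace {ρ | Re tr(ρ W) ≤ 1} is convex and contains the stabilizer states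
  have hlin : IsLinearMap ℝ (fun ρ : Matrix (Fin 2 × Fin 2) (Fin 2 × Fin 2) ℂ =>
      (trace (ρ * Wm)).re) := by
    constructor
    · intro a b; simp [Matrix.add_mul, trace_add]
    · intro c ρ
      rw [Matrix.smul_mul, trace_smul]
      simp [Complex.real_smul, Complex.mul_re]
  have hconv : Convex ℝ {ρ : Matrix (Fin 2 × Fin 2) (Fin 2 × Fin 2) ℂ |
      (trace (ρ * Wm)).re ≤ 1} := convex_halfSpace_le hlin 1
  have hsub := convexHull_min stab_bound hconv
  have hle : (trace (rho1 * Wm)).re ≤ 1 := hsub hmem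
  -- but Re tr(ρ₁ W) = 5/3
  have hval : trace (rho1 * Wm) = 5 / 3 := by
    have hW : rho1 = (1 / 4 : ℂ) • (Id2 ⊗ₖ Id2) + (1 / 12 : ℂ) • Wm := rfl
    rw [hW, Matrix.add_mul, trace_add, Matrix.smul_mul, Matrix.smul_mul, trace_smul, trace_smul]
    have h0 : trace ((Id2 ⊗ₖ Id2) * Wm) = 0 := by
      rw [← pauli00, keyG]; simp [GzT]
    have hWW : trace (Wm * Wm) = 20 := by
      nth_rewrite 1 [show Wm = Pauli 0 ⊗ₖ Pauli 2 + Pauli 0 ⊗ₖ Pauli 3 - Pauli 1 ⊗ₖ Pauli 1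
        + Pauli 2 ⊗ₖ Pauli 1 + Pauli 3 ⊗ₖ Pauli 1 from rfl]
      rw [Matrix.add_mul, Matrix.add_mul, Matrix.sub_mul, Matrix.add_mul,
        trace_add, trace_add, trace_sub, trace_add, keyG, keyG, keyG, keyG, keyG]
      norm_num [GzT, Matrix.vecHead, Matrix.vecTail]
      simp only [Matrix.cons_val]; norm_num
    rw [h0, hWW]
    simp
    norm_num
  rw [hval] at hle
  norm_num at hle
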